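/- Let m, n ≥ 1, let A be an m×n real matrix with rows a_1^T, …, a_m^T and let b ∈ ℝ^m. Then the system Ax ≤ b admits an error bound if and only if min_{‖h‖=1} max_{i∈J} ⟨a_i, h⟩ < 0 holds for every J ∈ 𝒥 := { J_{A,b}(x) : x ∈ ℝ^n, φ(x) > 0 }. -/

import Mathlib

open scoped RealInnerProductSpace
set_option linter.unusedSectionVars false

section ErrorBoundAux

variable {m n : ℕ} [Nonempty (Fin m)]
variable (a : Fin m → EuclideanSpace ℝ (Fin n)) (b : Fin m → ℝ)

/-- The max-residual function `φ(x) = max_i (⟨a_i, x⟩ - b_i)`. -/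
noncomputable def phiEB (x : EuclideanSpace ℝ (Fin n)) : ℝ := ⨆ i, (⟪a i, x⟫ - b i)

lemma le_phiEB (i : Fin m) (x : EuclideanSpace ℝ (Fin n)) : ⟪a i, x⟫ - b i ≤ phiEB a b x :=
  show ⟪a i, x⟫ - b i ≤ ⨆ j, (⟪a j, x⟫ - b j) from
    le_ciSup (Set.finite_range fun j => ⟪a j, x⟫ - b j).bddAbove i

lemma phiEB_le {x : EuclideanSpace ℝ (Fin n)} {r : ℝ} (h : ∀ i, ⟪a i, x⟫ - b i ≤ r) :
    phiEB a b x ≤ r := show (⨆ i, (⟪a i, x⟫ - b i)) ≤ r from ciSup_le h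

lemma phiEB_attain (x : EuclideanSpace ℝ (Fin n)) : ∃ i, phiEB a b x = ⟪a i, x⟫ - b i := by
  obtain ⟨i, hi⟩ := Finite.exists_max (fun i => ⟪a i, x⟫ - b i)
  exact ⟨i, le_antisymm (phiEB_le a b hi) (le_phiEB a b i x)⟩

lemma phiEB_cont : Continuous (phiEB a b) := by
  have : phiEB a b = fun x => Finset.univ.sup' Finset.univ_nonempty (fun i => ⟪a i, x⟫ - b i) := by
    funext x
    exact (Finset.sup'_univ_eq_ciSup _).symm
  rw [this]
  exact Continuous.finset_sup'_apply _ fun i _ =>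
    ((continuous_const.inner continuous_id).sub continuous_const)

/-- Descent step: if every active constraint has slope `≤ -c` along a unit vector `h`,
then `φ` decreases at rate `c` along `h` for small steps. -/
lemma descentEB (c : ℝ) (hc : 0 < c) (y h : EuclideanSpace ℝ (Fin n)) (hh : ‖h‖ = 1)
    (hdir : ∀ i, ⟪a i, y⟫ - b i = phiEB a b y → ⟪a i, h⟫ ≤ -c) :
    ∃ s0 > 0, ∀ s : ℝ, 0 < s → s ≤ s0 →
      phiEB a b (y + s • h) ≤ phiEB a b y - c * s := by
  classical
  set g : Fin m → ℝ := fun i =>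
    if ⟪a i, y⟫ - b i = phiEB a b y then 1
    else (phiEB a b y - (⟪a i, y⟫ - b i)) / (‖a i‖ + c) with hg
  have hgpos : ∀ i, 0 < g i := by
    intro i
    by_cases hi : ⟪a i, y⟫ - b i = phiEB a b y
    · simp only [hg]; rw [if_pos hi]; exact one_pos
    · have h1 : ⟪a i, y⟫ - b i < phiEB a b y := lt_of_le_of_ne (le_phiEB a b i y) hi
      have h2 : 0 < ‖a i‖ + c := by positivity
      simp only [hg]
      rw [if_neg hi]
      exact div_pos (by linarith) h2
  refine ⟨Finset.univ.inf' Finset.univ_nonempty g, ?_, ?_⟩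
  · exact (Finset.lt_inf'_iff _).2 fun i _ => hgpos i
  · intro s hs hs0
    refine phiEB_le a b fun i => ?_
    have hval : ⟪a i, y + s • h⟫ - b i = (⟪a i, y⟫ - b i) + s * ⟪a i, h⟫ := by
      rw [inner_add_right, real_inner_smul_right]; ring
    have hsgi : s ≤ g i := hs0.trans (Finset.inf'_le _ (Finset.mem_univ i))
    by_cases hi : ⟪a i, y⟫ - b i = phiEB a b y
    · have := hdir i hi
      have : s * ⟪a i, h⟫ ≤ s * (-c) := mul_le_mul_of_nonneg_left this hs.le
      rw [hval, hi]
      linarith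
    · have hCS : ⟪a i, h⟫ ≤ ‖a i‖ := by
        have := real_inner_le_norm (a i) h
        rwa [hh, mul_one] at this
      have h2 : 0 < ‖a i‖ + c := by positivity
      have hsgi' : s ≤ (phiEB a b y - (⟪a i, y⟫ - b i)) / (‖a i‖ + c) := by
        simp only [hg] at hsgi
        rwa [if_neg hi] at hsgi
      have hmul : s * (‖a i‖ + c) ≤ phiEB a b y - (⟪a i, y⟫ - b i) :=
        (le_div_iff₀ h2).1 hsgi'
      have : s * ⟪a i, h⟫ ≤ s * ‖a i‖ := mul_le_mul_of_nonneg_left hCS hs.le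
      rw [hval]
      nlinarith

/-- Reaching the polyhedron: if at every point with `φ > 0` there is a uniform descent
direction, then from any `x` with `φ(x) > 0` one reaches a point `y` with `φ(y) ≤ 0`
within distance `2 φ(x) / c`. -/
lemma reachEB (c : ℝ) (hc : 0 < c)
    (Hdesc : ∀ y : EuclideanSpace ℝ (Fin n), 0 < phiEB a b y →
      ∃ h, ‖h‖ = 1 ∧ ∀ i, ⟪a i, y⟫ - b i = phiEB a b y → ⟪a i, h⟫ ≤ -c)
    (x : EuclideanSpace ℝ (Fin n)) (hx : 0 < phiEB a b x) :
    ∃ y, phiEB a b y ≤ 0 ∧ (c / 2) * ‖y - x‖ ≤ phiEB a b x := by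
  set c2 : ℝ := c / 2 with hc2def
  have hc2 : 0 < c2 := by positivity
  set D : ℝ := phiEB a b x / c2 with hDdef
  have hD : 0 < D := div_pos hx hc2
  set K := Metric.closedBall x D with hK
  have hKc : IsCompact K := isCompact_closedBall x D
  have hxK : x ∈ K := Metric.mem_closedBall_self hD.le
  set F : EuclideanSpace ℝ (Fin n) → ℝ := fun y => phiEB a b y + c2 * ‖y - x‖ with hF
  have hFc : Continuous F :=
    (phiEB_cont a b).add (continuous_const.mul ((continuous_id.sub continuous_const).norm))
  obtain ⟨y, hyK, hmin⟩ := hKc.exists_isMinOn ⟨x, hxK⟩ hFc.continuousOn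
  have hmin' : ∀ z ∈ K, F y ≤ F z := fun z hz => hmin hz
  have hFyx : F y ≤ phiEB a b x := by
    have := hmin' x hxK
    simpa [hF] using this
  have hyD : ‖y - x‖ ≤ D := by
    simpa [hK, Metric.mem_closedBall, dist_eq_norm] using hyK
  by_cases hpos : 0 < phiEB a b y
  · exfalso
    have hFy : phiEB a b y + c2 * ‖y - x‖ ≤ phiEB a b x := hFyx
    have hDx : phiEB a b x = c2 * D := by
      rw [hDdef, mul_div_assoc', eq_div_iff hc2.ne']; ring
    have hlt : ‖y - x‖ < D := by
      by_contra hge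
      push_neg at hge
      have : ‖y - x‖ = D := le_antisymm hyD hge
      rw [this, hDx] at hFy
      linarith
    obtain ⟨h, hh, hdir⟩ := Hdesc y hpos
    obtain ⟨s0, hs0, hdesc⟩ := descentEB a b c hc y h hh hdir
    set s : ℝ := min s0 (D - ‖y - x‖) with hs
    have hspos : 0 < s := lt_min hs0 (by linarith)
    have hsle : s ≤ s0 := min_le_left _ _
    set z := y + s • h with hz
    have hzx : ‖z - x‖ ≤ ‖y - x‖ + s := by
      have : z - x = (y - x) + s • h := by rw [hz]; abel
      rw [this]
      calc ‖(y - x) + s • h‖ ≤ ‖y - x‖ + ‖s • h‖ := norm_add_le _ _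
        _ = ‖y - x‖ + s := by rw [norm_smul, hh, mul_one, Real.norm_eq_abs, abs_of_pos hspos]
    have hzK : z ∈ K := by
      rw [hK, Metric.mem_closedBall, dist_eq_norm]
      have : s ≤ D - ‖y - x‖ := min_le_right _ _
      linarith
    have h1 : phiEB a b z ≤ phiEB a b y - c * s := hdesc s hspos hsle
    have h2 : F y ≤ F z := hmin' z hzK
    have h3 : F z = phiEB a b z + c2 * ‖z - x‖ := rfl
    have h4 : F y = phiEB a b y + c2 * ‖y - x‖ := rfl
    have hczs : c2 * ‖z - x‖ ≤ c2 * (‖y - x‖ + s) := mul_le_mul_of_nonneg_left hzx hc2.le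
    have hcs : c = 2 * c2 := by rw [hc2def]; ring
    nlinarith
  · push_neg at hpos
    refine ⟨y, hpos, ?_⟩
    calc (c / 2) * ‖y - x‖ ≤ c2 * D := mul_le_mul_of_nonneg_left hyD hc2.le
      _ = phiEB a b x := by rw [hDdef, mul_div_assoc', div_eq_iff hc2.ne']; ring

end ErrorBoundAux

/-- the linear inequality system `Ax ≤ b` (with rows `a i` of `A`)
admits an error bound iff `min_{‖h‖=1} max_{i ∈ J} ⟨a_i, h⟩ < 0` for every
`J ∈ 𝒥 := { J_{A,b}(x) : φ(x) > 0 }`, where `φ(x) = max_i (⟨a_i,x⟩ - b_i)` and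
`J_{A,b}(x)` is the active index set at `x`. -/
theorem stmt5 (m n : ℕ) (hm : 1 ≤ m) (hn : 1 ≤ n)
    (a : Fin m → EuclideanSpace ℝ (Fin n)) (b : Fin m → ℝ) :
    (({x : EuclideanSpace ℝ (Fin n) | ∀ i, ⟪a i, x⟫ ≤ b i}.Nonempty ∧
        ∃ c : ℝ, 0 < c ∧ ∀ x : EuclideanSpace ℝ (Fin n),
          c * Metric.infDist x {y : EuclideanSpace ℝ (Fin n) | ∀ i, ⟪a i, y⟫ ≤ b i} ≤
            max (⨆ i, (⟪a i, x⟫ - b i)) 0) ↔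
      ∀ J : Set (Fin m),
        (∃ x : EuclideanSpace ℝ (Fin n), 0 < (⨆ i, (⟪a i, x⟫ - b i)) ∧
          J = {i | ⟪a i, x⟫ - b i = ⨆ j, (⟪a j, x⟫ - b j)}) →
        sInf {r : ℝ | ∃ h : EuclideanSpace ℝ (Fin n), ‖h‖ = 1 ∧
          r = sSup {s : ℝ | ∃ i ∈ J, s = ⟪a i, h⟫}} < 0) := by
  haveI : Nonempty (Fin m) := ⟨⟨0, hm⟩⟩
  constructor
  · rintro ⟨⟨y0, hy0⟩, -⟩ J ⟨x0, hx0, hJ⟩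
    have hx0' : 0 < phiEB a b x0 := hx0
    have hJ' : J = {i | ⟪a i, x0⟫ - b i = phiEB a b x0} := hJ
    have hy0' : ∀ i, ⟪a i, y0⟫ ≤ b i := hy0
    have hphiy0 : phiEB a b y0 ≤ 0 := phiEB_le a b fun i => sub_nonpos.2 (hy0' i)
    have hne : y0 ≠ x0 := by
      intro he
      rw [he] at hphiy0
      linarith
    set w := y0 - x0 with hwdef
    have hw : w ≠ 0 := sub_ne_zero.2 hne
    have hwn : 0 < ‖w‖ := norm_pos_iff.2 hw
    set h : EuclideanSpace ℝ (Fin n) := (‖w‖⁻¹ : ℝ) • w with hhdef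
    have hh1 : ‖h‖ = 1 := norm_smul_inv_norm (𝕜 := ℝ) hw
    obtain ⟨i0, hi0⟩ := phiEB_attain a b x0
    have hi0J : i0 ∈ J := by rw [hJ']; exact hi0.symm
    have hTbdd : ∀ h' : EuclideanSpace ℝ (Fin n),
        BddAbove {s : ℝ | ∃ i ∈ J, s = ⟪a i, h'⟫} := by
      intro h'
      refine ((Set.finite_range fun i => ⟪a i, h'⟫).subset ?_).bddAbove
      rintro s ⟨i, -, rfl⟩
      exact ⟨i, rfl⟩
    set M : ℝ := Finset.univ.sup' Finset.univ_nonempty (fun i => ‖a i‖) with hM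
    set S : Set ℝ := {r : ℝ | ∃ h' : EuclideanSpace ℝ (Fin n), ‖h'‖ = 1 ∧
      r = sSup {s : ℝ | ∃ i ∈ J, s = ⟪a i, h'⟫}} with hS
    have hSbdd : BddBelow S := by
      refine ⟨-M, ?_⟩
      rintro r ⟨h', hh', rfl⟩
      have hmem : ⟪a i0, h'⟫ ∈ {s : ℝ | ∃ i ∈ J, s = ⟪a i, h'⟫} := ⟨i0, hi0J, rfl⟩
      have h1 : ⟪a i0, h'⟫ ≤ sSup {s : ℝ | ∃ i ∈ J, s = ⟪a i, h'⟫} :=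
        le_csSup (hTbdd h') hmem
      have h2 : |⟪a i0, h'⟫| ≤ ‖a i0‖ := by
        have := abs_real_inner_le_norm (a i0) h'
        rwa [hh', mul_one] at this
      have h3 : ‖a i0‖ ≤ M := by
        rw [hM]
        exact Finset.le_sup' (fun i => ‖a i‖) (Finset.mem_univ i0)
      have h4 := neg_abs_le ⟪a i0, h'⟫
      linarith
    set r0 : ℝ := sSup {s : ℝ | ∃ i ∈ J, s = ⟪a i, h⟫} with hr0
    have hr0S : r0 ∈ S := ⟨h, hh1, rfl⟩
    have hr0neg : r0 < 0 := by
      have hbound : ∀ s ∈ {s : ℝ | ∃ i ∈ J, s = ⟪a i, h⟫},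
          s ≤ ‖w‖⁻¹ * (-(phiEB a b x0)) := by
        rintro s ⟨i, hiJ, rfl⟩
        have hvi : ⟪a i, x0⟫ - b i = phiEB a b x0 := by
          rw [hJ'] at hiJ
          exact hiJ
        have hw1 : ⟪a i, w⟫ = ⟪a i, y0⟫ - ⟪a i, x0⟫ := inner_sub_right _ _ _
        have hw2 : ⟪a i, w⟫ ≤ -(phiEB a b x0) := by
          have := hy0' i
          rw [hw1]
          linarith
        have : ⟪a i, h⟫ = ‖w‖⁻¹ * ⟪a i, w⟫ := real_inner_smul_right _ _ _
        rw [this]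
        exact mul_le_mul_of_nonneg_left hw2 (inv_nonneg.2 hwn.le)
      have hne' : {s : ℝ | ∃ i ∈ J, s = ⟪a i, h⟫}.Nonempty := ⟨⟪a i0, h⟫, i0, hi0J, rfl⟩
      have := csSup_le hne' hbound
      have hlt : ‖w‖⁻¹ * (-(phiEB a b x0)) < 0 :=
        mul_neg_of_pos_of_neg (inv_pos.2 hwn) (by linarith)
      exact lt_of_le_of_lt this hlt
    exact lt_of_le_of_lt (csInf_le hSbdd hr0S) hr0neg
  · intro Hc
    have key : ∀ J : Set (Fin m), ∃ cJ : ℝ, 0 < cJ ∧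
        ((∃ x : EuclideanSpace ℝ (Fin n), 0 < phiEB a b x ∧
            J = {i | ⟪a i, x⟫ - b i = phiEB a b x}) →
          ∃ h : EuclideanSpace ℝ (Fin n), ‖h‖ = 1 ∧ ∀ i ∈ J, ⟪a i, h⟫ ≤ -cJ) := by
      intro J
      by_cases hJ : ∃ x : EuclideanSpace ℝ (Fin n), 0 < phiEB a b x ∧
          J = {i | ⟪a i, x⟫ - b i = phiEB a b x}
      · set S : Set ℝ := {r : ℝ | ∃ h : EuclideanSpace ℝ (Fin n), ‖h‖ = 1 ∧
          r = sSup {s : ℝ | ∃ i ∈ J, s = ⟪a i, h⟫}} with hS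
        have hs : sInf S < 0 := Hc J hJ
        obtain ⟨r, hrS, hrneg⟩ : ∃ r ∈ S, r < 0 := by
          by_contra hcon
          push_neg at hcon
          rcases Set.eq_empty_or_nonempty S with hSe | hSne
          · rw [hSe, Real.sInf_empty] at hs
            exact lt_irrefl 0 hs
          · exact absurd hs (not_lt.2 (le_csInf hSne hcon))
        obtain ⟨h, hh, hre⟩ := hrS
        refine ⟨-r, by linarith, fun _ => ⟨h, hh, fun i hi => ?_⟩⟩
        rw [neg_neg, hre]
        refine le_csSup ?_ ⟨i, hi, rfl⟩
        refine ((Set.finite_range fun j => ⟪a j, h⟫).subset ?_).bddAbove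
        rintro s ⟨j, -, rfl⟩
        exact ⟨j, rfl⟩
      · exact ⟨1, one_pos, fun hx => absurd hx hJ⟩
    choose g hg using key
    have hfin : (Set.range g).Finite := Set.finite_range g
    have hne : (Set.range g).Nonempty := Set.range_nonempty g
    set c : ℝ := sInf (Set.range g) with hcdef
    obtain ⟨J0, hJ0⟩ := hne.csInf_mem hfin
    have hcpos : 0 < c := by
      rw [hcdef, ← hJ0]
      exact (hg J0).1
    have hcle : ∀ J, c ≤ g J := fun J => csInf_le hfin.bddBelow ⟨J, rfl⟩
    have Hdesc : ∀ y : EuclideanSpace ℝ (Fin n), 0 < phiEB a b y →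
        ∃ h, ‖h‖ = 1 ∧ ∀ i, ⟪a i, y⟫ - b i = phiEB a b y → ⟪a i, h⟫ ≤ -c := by
      intro y hy
      obtain ⟨h, hh, hb'⟩ := (hg {i | ⟪a i, y⟫ - b i = phiEB a b y}).2 ⟨y, hy, rfl⟩
      exact ⟨h, hh, fun i hi => (hb' i hi).trans (neg_le_neg (hcle _))⟩
    have reach' := reachEB a b c hcpos Hdesc
    have hPne : ∃ y : EuclideanSpace ℝ (Fin n), ∀ i, ⟪a i, y⟫ ≤ b i := by
      by_cases h0 : 0 < phiEB a b 0
      · obtain ⟨y, hy, -⟩ := reach' 0 h0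
        exact ⟨y, fun i => sub_nonpos.1 ((le_phiEB a b i y).trans hy)⟩
      · push_neg at h0
        exact ⟨0, fun i => sub_nonpos.1 ((le_phiEB a b i 0).trans h0)⟩
    refine ⟨hPne, c / 2, by positivity, fun x => ?_⟩
    by_cases hx : 0 < phiEB a b x
    · obtain ⟨y, hy0, hyd⟩ := reach' x hx
      have hyP : y ∈ {y : EuclideanSpace ℝ (Fin n) | ∀ i, ⟪a i, y⟫ ≤ b i} :=
        fun i => sub_nonpos.1 ((le_phiEB a b i y).trans hy0)
      have h1 : Metric.infDist x {y : EuclideanSpace ℝ (Fin n) | ∀ i, ⟪a i, y⟫ ≤ b i}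
          ≤ ‖y - x‖ := by
        have := Metric.infDist_le_dist_of_mem (x := x) hyP
        rwa [dist_eq_norm, norm_sub_rev] at this
      have h2 : c / 2 * Metric.infDist x {y : EuclideanSpace ℝ (Fin n) | ∀ i, ⟪a i, y⟫ ≤ b i}
          ≤ c / 2 * ‖y - x‖ := mul_le_mul_of_nonneg_left h1 (by positivity)
      have h3 : phiEB a b x ≤ max (phiEB a b x) 0 := le_max_left _ _
      exact h2.trans (hyd.trans h3)
    · push_neg at hx
      have hxP : x ∈ {y : EuclideanSpace ℝ (Fin n) | ∀ i, ⟪a i, y⟫ ≤ b i} :=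
        fun i => sub_nonpos.1 ((le_phiEB a b i x).trans hx)
      rw [Metric.infDist_zero_of_mem hxP, mul_zero]
      exact le_max_right _ _
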